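/- Consider a minimal block (tranca mínima) and fix j ∈ {1,…,6}. If neither player of the losing team has, in their initial hand, any tile containing 0 nor any tile containing j, then at least one of the two losing players plays at least one tile during the game. -/

import Mathlib

/-- A domino tile is an unordered pair of values in `{0,…,6}`. -/
abbrev Tile := Sym2 (Fin 7)

/-- The pip sum of the tile `[a,b]` is `a + b`. -/
def pips (t : Tile) : ℕ :=
  Sym2.lift ⟨fun (a b : Fin 7) => (a : ℕ) + (b : ℕ), fun a b => Nat.add_comm a b⟩ t

/-- The board: the chain of already played tiles, as a list of oriented tiles
concatenated left to right (consecutive tiles match end to end). -/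
abbrev Board := List (Fin 7 × Fin 7)

/-- The total pip sum of the tiles on a board. -/
def boardPips (b : Board) : ℕ := (b.map fun p => (p.1 : ℕ) + (p.2 : ℕ)).sum

/-- A tile `t` can extend a (nonempty) board `b` when `t` contains one of the two
open ends of `b`. -/
def canExtend (b : Board) (t : Tile) : Prop :=
  b ≠ [] ∧ (b.head!.1 ∈ t ∨ b.getLast!.2 ∈ t)

/-- The total pip sum of a hand of tiles. -/
def handPips (h : Finset Tile) : ℕ := ∑ t ∈ h, pips t

/-- A game state: the board of already played tiles, the four remaining hands, and
whose turn it is. -/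
structure GState where
  board : Board
  hands : Fin 4 → Finset Tile
  turn : Fin 4

/-- Players `0` and `2` form team `false`; players `1` and `3` form team `true`. -/
def playerTeam (i : Fin 4) : Bool := decide ((i : ℕ) % 2 = 1)

/-- The total pip sum remaining in the hands of the two players of a team. -/
def GState.teamPips (s : GState) (tm : Bool) : ℕ :=
  if tm then handPips (s.hands 1) + handPips (s.hands 3)
  else handPips (s.hands 0) + handPips (s.hands 2)

/-- A single legal move of the game (the game is still running, i.e. all hands are
nonempty).  The player to move either plays a tile from their hand — the first tile
played starts the chain, and every later tile is appended, suitably oriented, to one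
of the two open ends of the chain — or passes, which is permitted only if no tile
remaining in their hand contains either open end of the chain. -/
inductive Step : GState → GState → Prop
  | playFirst (s : GState) (p : Fin 7 × Fin 7)
      (hrun : ∀ i, s.hands i ≠ ∅)
      (hb : s.board = [])
      (ht : Sym2.mk p.1 p.2 ∈ s.hands s.turn) :
      Step s ⟨[p],
        Function.update s.hands s.turn ((s.hands s.turn).erase (Sym2.mk p.1 p.2)),
        s.turn + 1⟩
  | playLeft (s : GState) (p : Fin 7 × Fin 7)
      (hrun : ∀ i, s.hands i ≠ ∅)
      (hb : s.board ≠ [])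
      (ht : Sym2.mk p.1 p.2 ∈ s.hands s.turn)
      (hfit : p.2 = s.board.head!.1) :
      Step s ⟨p :: s.board,
        Function.update s.hands s.turn ((s.hands s.turn).erase (Sym2.mk p.1 p.2)),
        s.turn + 1⟩
  | playRight (s : GState) (p : Fin 7 × Fin 7)
      (hrun : ∀ i, s.hands i ≠ ∅)
      (hb : s.board ≠ [])
      (ht : Sym2.mk p.1 p.2 ∈ s.hands s.turn)
      (hfit : p.1 = s.board.getLast!.2) :
      Step s ⟨s.board ++ [p],
        Function.update s.hands s.turn ((s.hands s.turn).erase (Sym2.mk p.1 p.2)),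
        s.turn + 1⟩
  | pass (s : GState)
      (hrun : ∀ i, s.hands i ≠ ∅)
      (hb : s.board ≠ [])
      (hcant : ∀ t ∈ s.hands s.turn, ¬ canExtend s.board t) :
      Step s ⟨s.board, s.hands, s.turn + 1⟩

/-- A four-player partnership domino game: a partition of the 28 domino tiles into
four initial hands of 7 tiles each, together with a legal play sequence of states;
player 1 (index `0`) moves first, and players move cyclically. -/
structure Game where
  initHands : Fin 4 → Finset Tile
  card_initHands : ∀ i, (initHands i).card = 7
  disj_initHands : ∀ i j, i ≠ j → Disjoint (initHands i) (initHands j)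
  cover_initHands : ∀ t : Tile, ∃ i, t ∈ initHands i
  states : List GState
  states_ne : states ≠ []
  head_states : states.head states_ne = ⟨[], initHands, 0⟩
  chain_states : states.Chain' Step

/-- The final position of a game. -/
def Game.finalState (g : Game) : GState := g.states.getLast g.states_ne

/-- A position is blocked if at least one tile has been played and no player's
remaining hand contains a tile containing either open end of the chain. -/
def IsBlocked (s : GState) : Prop :=
  s.board ≠ [] ∧ ∀ i : Fin 4, ∀ t ∈ s.hands i, ¬ canExtend s.board t

/-- A game ends blocked if its final position is blocked. -/
def Game.EndsBlocked (g : Game) : Prop := IsBlocked g.finalState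

/-- Team `tm` plays at least one tile during the game: at some turn the player to move
belongs to team `tm` and the board changes (a tile is placed). -/
def Game.teamPlays (g : Game) (tm : Bool) : Prop :=
  ∃ (i : ℕ) (h : i + 1 < g.states.length),
    playerTeam ((g.states.get ⟨i, by omega⟩).turn) = tm ∧
    (g.states.get ⟨i + 1, h⟩).board ≠ (g.states.get ⟨i, by omega⟩).board

def multV (v : Fin 7) (t : Tile) : ℕ :=
  Sym2.lift ⟨fun a b => (if a = v then 1 else 0) + (if b = v then 1 else 0),
    fun a b => Nat.add_comm _ _⟩ t

lemma multV_mk (v : Fin 7) (a b : Fin 7) :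
    multV v (Sym2.mk a b) = (if a = v then 1 else 0) + (if b = v then 1 else 0) := rfl

lemma multV_eq_zero {v : Fin 7} {t : Tile} (h : v ∉ t) : multV v t = 0 := by
  induction t using Sym2.ind with
  | _ a b =>
    simp only [Sym2.mem_iff, not_or] at h
    simp [multV_mk, Ne.symm h.1, Ne.symm h.2]

lemma one_le_multV {v : Fin 7} {t : Tile} (h : v ∈ t) : 1 ≤ multV v t := by
  induction t using Sym2.ind with
  | _ a b =>
    rw [Sym2.mem_iff] at h
    rcases h with h | h <;> simp [multV_mk, h.symm] <;> split <;> omega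

lemma mem_of_multV_ne_zero {v : Fin 7} {t : Tile} (h : multV v t ≠ 0) : v ∈ t := by
  by_contra hc; exact h (multV_eq_zero hc)

lemma sum_multV (t : Tile) : ∑ v : Fin 7, multV v t = 2 := by
  induction t using Sym2.ind with
  | _ a b => simp [multV_mk, Finset.sum_add_distrib]

lemma pips_eq_sum (t : Tile) : pips t = ∑ v : Fin 7, (v : ℕ) * multV v t := by
  induction t using Sym2.ind with
  | _ a b =>
    simp only [pips, multV_mk, Sym2.lift_mk]
    simp [mul_add, mul_ite, Finset.sum_add_distrib]

def countV (v : Fin 7) (b : Board) : ℕ := (b.map fun p => multV v (Sym2.mk p.1 p.2)).sum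

lemma boardPips_eq_sum (b : Board) : boardPips b = ∑ v : Fin 7, (v : ℕ) * countV v b := by
  induction b with
  | nil => simp [boardPips, countV]
  | cons p l ih =>
    have hp : ((p.1 : ℕ) + (p.2 : ℕ)) = ∑ v : Fin 7, (v:ℕ) * multV v (Sym2.mk p.1 p.2) := by
      rw [← pips_eq_sum]; rfl
    simp only [boardPips, countV, List.map_cons, List.sum_cons] at *
    rw [ih, hp, ← Finset.sum_add_distrib]
    congr 1; funext v; ring

lemma countV_cons (v : Fin 7) (p : Fin 7 × Fin 7) (l : Board) :
    countV v (p :: l) = multV v (Sym2.mk p.1 p.2) + countV v l := by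
  simp [countV]

lemma getLast!_cons {l : Board} (p : Fin 7 × Fin 7) (h : l ≠ []) :
    (p :: l).getLast! = l.getLast! := by
  rcases l with _ | ⟨q, t⟩
  · exact absurd rfl h
  · simp [List.getLast!, List.getLast]

lemma multV_mk' (v : Fin 7) (p : Fin 7 × Fin 7) :
    multV v (Sym2.mk p.1 p.2) = (if p.1 = v then 1 else 0) + (if p.2 = v then 1 else 0) := rfl

lemma countV_parity (v : Fin 7) : ∀ (b : Board), b ≠ [] →
    b.Chain' (fun p q => p.2 = q.1) →
    countV v b % 2 =
      ((if b.head!.1 = v then 1 else 0) + (if b.getLast!.2 = v then 1 else 0)) % 2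
  | [], h, _ => absurd rfl h
  | [p], _, _ => by
      have h1 : countV v [p] = multV v (Sym2.mk p.1 p.2) := by simp [countV]
      have hh : ([p] : Board).head! = p := rfl
      have hl : ([p] : Board).getLast! = p := rfl
      rw [h1, multV_mk', hh, hl]
  | p :: q :: l, _, hch => by
      rw [List.Chain', List.isChain_cons_cons] at hch
      obtain ⟨hpq, hch⟩ := hch
      have ih := countV_parity v (q :: l) (by simp) hch
      rw [countV_cons, multV_mk']
      rw [getLast!_cons p (by simp)]
      have hh : (p :: q :: l).head! = p := rfl
      have hh2 : (q :: l).head! = q := rfl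
      rw [hh]
      rw [hh2] at ih
      have hq : q.1 = p.2 := hpq.symm
      rw [hq] at ih
      split_ifs at ih ⊢ <;> omega


def handsVal (s : GState) : Multiset Tile := ∑ i : Fin 4, (s.hands i).val

lemma handsVal_update (s : GState) (t : Tile) (ht : t ∈ s.hands s.turn) :
    t ::ₘ (∑ i : Fin 4, ((Function.update s.hands s.turn ((s.hands s.turn).erase t)) i).val)
      = handsVal s := by
  have hf : (fun i => ((Function.update s.hands s.turn ((s.hands s.turn).erase t)) i).val)
      = Function.update (fun i => (s.hands i).val) s.turn ((s.hands s.turn).erase t).val := by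
    funext x
    by_cases hx : x = s.turn <;> simp [Function.update, hx]
  simp only [hf]
  rw [Finset.sum_update_of_mem (Finset.mem_univ _)]
  rw [← Multiset.cons_add, Finset.erase_val, Multiset.cons_erase ht]
  rw [handsVal, ← Finset.add_sum_erase Finset.univ _ (Finset.mem_univ s.turn)]
  rw [Finset.sdiff_singleton_eq_erase]


lemma getLast!_eq_getLast : ∀ (l : Board) (h : l ≠ []), l.getLast! = l.getLast h := by
  intro l h
  rcases l with _ | ⟨a, t⟩
  · exact absurd rfl h
  · simp [List.getLast!]

def GInv (init : Fin 4 → Finset Tile) (tm : Bool) (s : GState) : Prop :=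
  (∀ i, playerTeam i = !tm → s.hands i = init i) ∧
  ((↑(s.board.map (fun p => Sym2.mk p.1 p.2)) + handsVal s = (Finset.univ : Finset Tile).val)) ∧
  s.board.Chain' (fun p q => p.2 = q.1)

lemma multiset_board_update (s : GState) (p : Fin 7 × Fin 7)
    (ht : Sym2.mk p.1 p.2 ∈ s.hands s.turn) (M : Multiset Tile)
    (hI : M + handsVal s = (Finset.univ : Finset Tile).val) :
    (Sym2.mk p.1 p.2 ::ₘ M) +
      (∑ i : Fin 4, ((Function.update s.hands s.turn ((s.hands s.turn).erase (Sym2.mk p.1 p.2))) i).val)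
      = (Finset.univ : Finset Tile).val := by
  have h := handsVal_update s (Sym2.mk p.1 p.2) ht
  calc (Sym2.mk p.1 p.2 ::ₘ M) + _
      = M + (Sym2.mk p.1 p.2 ::ₘ (∑ i : Fin 4, ((Function.update s.hands s.turn ((s.hands s.turn).erase (Sym2.mk p.1 p.2))) i).val)) := by
        rw [Multiset.cons_add, ← Multiset.singleton_add, ← Multiset.singleton_add]
        exact add_left_comm _ _ _
    _ = M + handsVal s := by rw [h]
    _ = _ := hI

lemma hands_eq_of_update (s : GState) (init : Fin 4 → Finset Tile) (tm : Bool)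
    (h1 : ∀ i, playerTeam i = !tm → s.hands i = init i)
    (hteam : playerTeam s.turn ≠ !tm) (E : Finset Tile) :
    ∀ i, playerTeam i = !tm → Function.update s.hands s.turn E i = init i := by
  intro i hi
  have hne : i ≠ s.turn := by
    intro hc
    rw [hc] at hi
    exact hteam hi
  rw [Function.update_of_ne hne]
  exact h1 i hi

lemma inv_step (init : Fin 4 → Finset Tile) (tm : Bool) (s s' : GState) (hstep : Step s s')
    (hnb : playerTeam s.turn = !tm → s'.board = s.board) :
    GInv init tm s → GInv init tm s' := by
  rintro ⟨h1, h2, h3⟩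
  cases hstep with
  | playFirst p hrun hb ht =>
    have hteam : playerTeam s.turn ≠ !tm := by
      intro hc
      have h := hnb hc
      rw [hb] at h
      simp at h
    refine ⟨hands_eq_of_update s init tm h1 hteam _, ?_, ?_⟩
    · simp only [handsVal]
      simp only [List.map_cons, List.map_nil]
      have he : (↑([Sym2.mk p.1 p.2] : List Tile) : Multiset Tile)
          = Sym2.mk p.1 p.2 ::ₘ (↑(s.board.map (fun p => Sym2.mk p.1 p.2)) : Multiset Tile) := by
        rw [hb]; rfl
      rw [he]
      exact multiset_board_update s p ht _ h2
    · exact List.isChain_singleton p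
  | playLeft p hrun hb ht hfit =>
    have hteam : playerTeam s.turn ≠ !tm := by
      intro hc
      exact (List.cons_ne_self p s.board) (hnb hc)
    refine ⟨hands_eq_of_update s init tm h1 hteam _, ?_, ?_⟩
    · simp only [handsVal]
      rw [List.map_cons]
      rw [show (↑(Sym2.mk p.1 p.2 :: s.board.map (fun p => Sym2.mk p.1 p.2)) : Multiset Tile)
            = Sym2.mk p.1 p.2 ::ₘ ↑(s.board.map (fun p => Sym2.mk p.1 p.2)) from rfl]
      exact multiset_board_update s p ht _ h2
    · show List.Chain' _ (p :: s.board)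
      rw [List.Chain', List.isChain_cons]
      refine ⟨?_, h3⟩
      intro q hq
      rcases hb2 : s.board with _ | ⟨r, rest⟩
      · exact absurd hb2 hb
      · rw [hb2] at hq hfit
        simp only [List.head?_cons, Option.mem_some_iff] at hq
        subst hq
        simpa using hfit
  | playRight p hrun hb ht hfit =>
    have hteam : playerTeam s.turn ≠ !tm := by
      intro hc
      have h := congrArg List.length (hnb hc)
      simp at h
    refine ⟨hands_eq_of_update s init tm h1 hteam _, ?_, ?_⟩
    · simp only [handsVal]
      rw [List.map_append]
      simp only [List.map_cons, List.map_nil]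
      have he : (↑(s.board.map (fun p => Sym2.mk p.1 p.2) ++ [Sym2.mk p.1 p.2] : List Tile) : Multiset Tile)
          = Sym2.mk p.1 p.2 ::ₘ ↑(s.board.map (fun p => Sym2.mk p.1 p.2)) := by
        rw [show (↑(s.board.map (fun p => Sym2.mk p.1 p.2) ++ [Sym2.mk p.1 p.2] : List Tile) : Multiset Tile)
              = ↑(s.board.map (fun p => Sym2.mk p.1 p.2)) + {Sym2.mk p.1 p.2} from rfl]
        rw [← Multiset.singleton_add]
        exact add_comm _ _
      rw [he]
      exact multiset_board_update s p ht _ h2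
    · show List.Chain' _ (s.board ++ [p])
      rw [List.Chain', List.isChain_append]
      refine ⟨h3, List.isChain_singleton p, ?_⟩
      intro x hx y hy
      simp only [List.head?_cons, Option.mem_some_iff] at hy
      subst hy
      rw [getLast!_eq_getLast s.board hb] at hfit
      rw [List.getLast?_eq_getLast (l := s.board) hb, Option.mem_some_iff] at hx
      rw [hfit, hx]
  | pass hrun hb hcant =>
    exact ⟨h1, h2, h3⟩


section DecideFacts

lemma card_avoid2 : ∀ (j : Fin 7), j ≠ 0 →
    ((Finset.univ : Finset Tile).filter (fun t => (0:Fin 7) ∉ t ∧ j ∉ t)).card = 15 := by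
  decide

set_option maxHeartbeats 4000000 in
lemma card_avoid3 : ∀ (a b c : Fin 7), a ≠ b → a ≠ c → b ≠ c →
    ((Finset.univ : Finset Tile).filter (fun t => a ∉ t ∧ b ∉ t ∧ c ∉ t)).card ≤ 10 := by
  decide

lemma sum_filter_mem : ∀ (e : Fin 7),
    ∑ t ∈ (Finset.univ : Finset Tile).filter (fun t => e ∈ t), multV e t = 8 := by
  decide

lemma sum_g0 : ∑ v : Fin 7, (if v = 0 then 0 else 2 * (v:ℕ)) = 42 := by decide

lemma sum_gj : ∀ (j : Fin 7), ∑ v : Fin 7, (2 * (v:ℕ) + if v = j then 6 * (j:ℕ) else 0)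
    = 42 + 6 * (j:ℕ) := by decide

lemma card_K : ∀ (j : Fin 7), j ≠ 0 →
    ((Finset.univ : Finset (Fin 7)) \ {0, j}).card = 5 := by decide

end DecideFacts

lemma count_val (A : Finset Tile) (t : Tile) :
    Multiset.count t A.val = if t ∈ A then 1 else 0 := by
  split
  · exact Multiset.count_eq_one_of_mem A.nodup (by assumption)
  · exact Multiset.count_eq_zero_of_notMem (by assumption)

lemma initHands_val (init : Fin 4 → Finset Tile)
    (hdisj : ∀ i j, i ≠ j → Disjoint (init i) (init j))
    (hcover : ∀ t : Tile, ∃ i, t ∈ init i) :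
    ∑ i : Fin 4, (init i).val = (Finset.univ : Finset Tile).val := by
  refine Multiset.ext.mpr (fun t => ?_)
  rw [Multiset.count_sum']
  rw [Multiset.count_eq_one_of_mem (Finset.univ : Finset Tile).nodup (Finset.mem_univ t)]
  obtain ⟨i0, hi0⟩ := hcover t
  rw [Finset.sum_eq_single i0]
  · rw [count_val, if_pos hi0]
  · intro b _ hb
    rw [count_val, if_neg]
    exact fun hc => (Finset.disjoint_left.mp (hdisj b i0 hb)) hc hi0
  · exact fun h => absurd (Finset.mem_univ i0) h

lemma countV_eq_sum (v : Fin 7) (b : Board) (B' : Finset Tile)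
    (hM : (↑(b.map (fun p => Sym2.mk p.1 p.2)) : Multiset Tile) = B'.val) :
    countV v b = ∑ t ∈ B', multV v t := by
  have : countV v b = (((↑(b.map (fun p => Sym2.mk p.1 p.2))) : Multiset Tile).map (multV v)).sum := by
    simp [countV, List.map_map, Function.comp_def]
  rw [this, hM]
  rfl


/-- Consider a minimal block (tranca mínima) and fix a nonzero value `j`.  If neither
player of the losing team has, in their initial hand, any tile containing 0 nor any
tile containing `j`, then at least one of the two losing players plays at least one
tile during the game. -/
theorem minimal_block_loser_avoids_zero_and_j_plays (g : Game) (tm : Bool)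
    (j : Fin 7) (hj : j ≠ 0)
    (hblocked : g.EndsBlocked)
    (hmin : boardPips g.finalState.board = 42)
    (hwin : g.finalState.teamPips tm < g.finalState.teamPips (!tm))
    (hhands : ∀ i : Fin 4, playerTeam i = !tm →
      ∀ t ∈ g.initHands i, (0 : Fin 7) ∉ t ∧ j ∉ t) :
    g.teamPlays (!tm) := by
  classical
  by_contra hplay
  have hnb : ∀ (i : ℕ) (h : i + 1 < g.states.length),
      playerTeam ((g.states.get ⟨i, by omega⟩).turn) = !tm →
      (g.states.get ⟨i + 1, h⟩).board = (g.states.get ⟨i, by omega⟩).board := by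
    intro i h hp
    by_contra hc
    exact hplay ⟨i, h, hp, hc⟩
  have hchain := g.chain_states
  rw [List.Chain', List.isChain_iff_getElem] at hchain
  have hinv : ∀ (i : ℕ) (h : i < g.states.length),
      GInv g.initHands tm (g.states.get ⟨i, h⟩) := by
    intro i
    induction i with
    | zero =>
      intro h
      have h0 : g.states.get ⟨0, h⟩ = ⟨[], g.initHands, 0⟩ := by
        rw [← g.head_states]
        exact List.get_mk_zero h
      rw [h0]
      refine ⟨fun i _ => rfl, ?_, List.isChain_nil⟩
      show (↑(List.map (fun p => Sym2.mk p.1 p.2) ([] : Board)) + handsVal ⟨[], g.initHands, 0⟩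
        = (Finset.univ : Finset Tile).val)
      simp only [List.map_nil]
      rw [show ((↑([] : List Tile)) : Multiset Tile) = 0 from rfl, zero_add]
      exact initHands_val g.initHands g.disj_initHands g.cover_initHands
    | succ i ih =>
      intro h
      exact inv_step g.initHands tm _ _ (hchain i (by omega)) (hnb i h) (ih (by omega))
  have hlenpos : 0 < g.states.length := List.length_pos_iff.mpr g.states_ne
  have hGI : GInv g.initHands tm g.finalState := by
    rw [Game.finalState, List.getLast_eq_getElem]
    exact hinv (g.states.length - 1) (by omega)
  obtain ⟨hI1, hI2, hI3⟩ := hGI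
  obtain ⟨hbne, hblk⟩ := hblocked
  have hblk' : ∀ i : Fin 4, ∀ t ∈ g.finalState.hands i,
      g.finalState.board.head!.1 ∉ t ∧ g.finalState.board.getLast!.2 ∉ t := by
    intro i t ht
    have hc := hblk i t ht
    rw [canExtend] at hc
    push_neg at hc
    exact hc hbne
  -- the played tiles
  have hM : (↑(g.finalState.board.map (fun p => Sym2.mk p.1 p.2)) : Multiset Tile)
      = (Finset.univ \ (g.finalState.hands 0 ∪ g.finalState.hands 1 ∪ g.finalState.hands 2 ∪
          g.finalState.hands 3)).val := by
    refine Multiset.ext.mpr (fun t => ?_)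
    have hc := congrArg (Multiset.count t) hI2
    rw [Multiset.count_add,
      Multiset.count_eq_one_of_mem (Finset.univ : Finset Tile).nodup (Finset.mem_univ t)] at hc
    rw [handsVal, Multiset.count_sum'] at hc
    simp only [count_val] at hc
    rw [count_val]
    rw [Fin.sum_univ_four] at hc
    by_cases h0 : t ∈ g.finalState.hands 0 <;> by_cases h1t : t ∈ g.finalState.hands 1 <;>
      by_cases h2t : t ∈ g.finalState.hands 2 <;> by_cases h3t : t ∈ g.finalState.hands 3 <;>
      simp [h0, h1t, h2t, h3t] at hc ⊢ <;> omega
  set B' : Finset Tile := Finset.univ \ (g.finalState.hands 0 ∪ g.finalState.hands 1 ∪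
    g.finalState.hands 2 ∪ g.finalState.hands 3) with hB'
  have hcount : ∀ v, countV v g.finalState.board = ∑ t ∈ B', multV v t :=
    fun v => countV_eq_sum v _ B' hM
  have hend : ∀ t : Tile,
      (g.finalState.board.head!.1 ∈ t ∨ g.finalState.board.getLast!.2 ∈ t) → t ∈ B' := by
    intro t ht
    rw [hB', Finset.mem_sdiff]
    refine ⟨Finset.mem_univ t, ?_⟩
    intro hc
    simp only [Finset.mem_union] at hc
    rcases hc with ((h | h) | h) | h <;>
    · obtain ⟨ha, hb2⟩ := hblk' _ t h
      rcases ht with h' | h'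
      · exact ha h'
      · exact hb2 h'
  obtain ⟨a, b, hab, hpa, hpb⟩ : ∃ a b : Fin 4, a ≠ b ∧ playerTeam a = !tm ∧ playerTeam b = !tm := by
    cases tm
    · exact ⟨1, 3, by decide, by decide, by decide⟩
    · exact ⟨0, 2, by decide, by decide, by decide⟩
  set L : Finset Tile := g.initHands a ∪ g.initHands b with hL
  have hLcard : L.card = 14 := by
    rw [hL, Finset.card_union_of_disjoint (g.disj_initHands a b hab),
      g.card_initHands, g.card_initHands]
  have hLavoid : ∀ t ∈ L, (0 : Fin 7) ∉ t ∧ j ∉ t := by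
    intro t ht
    rw [hL, Finset.mem_union] at ht
    rcases ht with h | h
    · exact hhands a hpa t h
    · exact hhands b hpb t h
  have hLhands : ∀ t ∈ L,
      g.finalState.board.head!.1 ∉ t ∧ g.finalState.board.getLast!.2 ∉ t := by
    intro t ht
    rw [hL, Finset.mem_union] at ht
    rcases ht with h | h
    · exact hblk' a t (by rw [hI1 a hpa]; exact h)
    · exact hblk' b t (by rw [hI1 b hpb]; exact h)
  have hmemunion : ∀ (i : Fin 4) (t : Tile), t ∈ g.finalState.hands i →
      t ∈ (g.finalState.hands 0 ∪ g.finalState.hands 1 ∪ g.finalState.hands 2 ∪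
        g.finalState.hands 3) := by
    intro i
    fin_cases i <;> intro t ht <;> simp only [Finset.mem_union] <;> tauto
  have hLnB' : ∀ t ∈ L, t ∉ B' := by
    intro t ht hB
    rw [hB', Finset.mem_sdiff] at hB
    apply hB.2
    rw [hL, Finset.mem_union] at ht
    rcases ht with h | h
    · exact hmemunion a t (by rw [hI1 a hpa]; exact h)
    · exact hmemunion b t (by rw [hI1 b hpb]; exact h)
  have hends : ∀ e : Fin 7,
      (e = g.finalState.board.head!.1 ∨ e = g.finalState.board.getLast!.2) →
      e = 0 ∨ e = j := by
    intro e he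
    by_contra hc
    push_neg at hc
    obtain ⟨h0, hj'⟩ := hc
    have hsub : L ⊆ Finset.univ.filter (fun t => (0 : Fin 7) ∉ t ∧ j ∉ t ∧ e ∉ t) := by
      intro t ht
      rw [Finset.mem_filter]
      refine ⟨Finset.mem_univ t, (hLavoid t ht).1, (hLavoid t ht).2, ?_⟩
      rcases he with rfl | rfl
      · exact (hLhands t ht).1
      · exact (hLhands t ht).2
    have hcards := Finset.card_le_card hsub
    rw [hLcard] at hcards
    have h10 := card_avoid3 0 j e (Ne.symm hj) (Ne.symm h0) (Ne.symm hj')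
    omega
  have h8 : ∀ e : Fin 7,
      (e = g.finalState.board.head!.1 ∨ e = g.finalState.board.getLast!.2) →
      countV e g.finalState.board = 8 := by
    intro e he
    rw [hcount]
    have hfe : B'.filter (fun t => e ∈ t) = Finset.univ.filter (fun t => e ∈ t) := by
      apply Finset.Subset.antisymm
      · intro t ht
        exact Finset.mem_filter.mpr ⟨Finset.mem_univ t, (Finset.mem_filter.mp ht).2⟩
      · intro t ht
        rw [Finset.mem_filter] at ht ⊢
        refine ⟨hend t ?_, ht.2⟩
        rcases he with rfl | rfl
        · exact Or.inl ht.2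
        · exact Or.inr ht.2
    calc ∑ t ∈ B', multV e t
        = ∑ t ∈ B'.filter (fun t => e ∈ t), multV e t :=
          (Finset.sum_filter_of_ne (fun t _ hne => mem_of_multV_ne_zero hne)).symm
      _ = ∑ t ∈ Finset.univ.filter (fun t => e ∈ t), multV e t := by rw [hfe]
      _ = 8 := sum_filter_mem e
  have hpar := fun v => countV_parity v g.finalState.board hbne hI3
  have hsum42 : ∑ v : Fin 7, (v : ℕ) * countV v g.finalState.board = 42 := by
    rw [← boardPips_eq_sum]
    exact hmin
  have hjpos : 1 ≤ (j : ℕ) := by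
    have : (j : ℕ) ≠ 0 := fun hc => hj (Fin.ext (by simpa using hc))
    omega
  have he1' := hends g.finalState.board.head!.1 (Or.inl rfl)
  have he2' := hends g.finalState.board.getLast!.2 (Or.inr rfl)
  rcases he1' with he1' | he1' <;> rcases he2' with he2' | he2'
  · -- ends (0,0): the long case
    have hcv2 : ∀ v : Fin 7, v ≠ 0 → countV v g.finalState.board = 2 := by
      have hle : ∀ v ∈ (Finset.univ : Finset (Fin 7)),
          (if v = 0 then 0 else 2 * (v : ℕ)) ≤ (v : ℕ) * countV v g.finalState.board := by
        intro v _
        by_cases hv0 : v = 0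
        · subst hv0; simp
        · rw [if_neg hv0]
          have hpv := hpar v
          rw [he1', he2', if_neg (fun hc => hv0 hc.symm)] at hpv
          have hmem : Sym2.mk (0 : Fin 7) v ∈ B' :=
            hend _ (Or.inl (by rw [he1']; exact Sym2.mem_mk_left 0 v))
          have h1 : 1 ≤ countV v g.finalState.board := by
            rw [hcount]
            calc 1 ≤ multV v (Sym2.mk (0 : Fin 7) v) :=
                  one_le_multV (Sym2.mem_mk_right 0 v)
              _ ≤ ∑ t ∈ B', multV v t :=
                  Finset.single_le_sum (fun t _ => Nat.zero_le _) hmem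
          have h2 : 2 ≤ countV v g.finalState.board := by omega
          calc 2 * (v : ℕ) = (v : ℕ) * 2 := by ring
            _ ≤ (v : ℕ) * countV v g.finalState.board := Nat.mul_le_mul_left _ h2
      have heq := (Finset.sum_eq_sum_iff_of_le hle).mp (by rw [hsum42, sum_g0])
      intro v hv0
      have hv := heq v (Finset.mem_univ v)
      rw [if_neg hv0] at hv
      have hvpos : 0 < (v : ℕ) := by
        have : (v : ℕ) ≠ 0 := fun hc => hv0 (Fin.ext (by simpa using hc))
        omega
      exact (Nat.eq_of_mul_eq_mul_left hvpos (by rw [← hv]; ring)).symm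
    set Jf := B'.filter (fun t => j ∈ t ∧ (0 : Fin 7) ∉ t) with hJf
    set Df := B'.filter (fun t => (0 : Fin 7) ∉ t ∧ j ∉ t) with hDf
    have hs0j : Sym2.mk (0 : Fin 7) j ∈ B' :=
      hend _ (Or.inl (by rw [he1']; exact Sym2.mem_mk_left 0 j))
    have hJcard : Jf.card ≤ 1 := by
      have hsubs : insert (Sym2.mk (0 : Fin 7) j) Jf ⊆ B' := by
        intro t ht
        rcases Finset.mem_insert.mp ht with rfl | ht'
        · exact hs0j
        · exact Finset.filter_subset _ _ ht'
      have hnotin : Sym2.mk (0 : Fin 7) j ∉ Jf := by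
        rw [hJf, Finset.mem_filter]
        rintro ⟨-, -, h0⟩
        exact h0 (Sym2.mem_mk_left 0 j)
      have hsumle : ∑ t ∈ insert (Sym2.mk (0 : Fin 7) j) Jf, multV j t
          ≤ ∑ t ∈ B', multV j t :=
        Finset.sum_le_sum_of_subset hsubs
      rw [Finset.sum_insert hnotin] at hsumle
      have hJge : Jf.card ≤ ∑ t ∈ Jf, multV j t := by
        rw [Finset.card_eq_sum_ones]
        exact Finset.sum_le_sum (fun t ht => one_le_multV (Finset.mem_filter.mp ht).2.1)
      have h1le : 1 ≤ multV j (Sym2.mk (0 : Fin 7) j) :=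
        one_le_multV (Sym2.mem_mk_right 0 j)
      have hcj := hcv2 j hj
      rw [hcount] at hcj
      have hfin2 : 1 + Jf.card ≤ 2 := by
        calc 1 + Jf.card ≤ multV j (Sym2.mk (0 : Fin 7) j) + ∑ t ∈ Jf, multV j t :=
              Nat.add_le_add h1le hJge
          _ ≤ ∑ t ∈ B', multV j t := hsumle
          _ = 2 := hcj
      omega
    have hDcard : Df.card ≤ 1 := by
      have hsub : Df ⊆ (Finset.univ.filter (fun t => (0 : Fin 7) ∉ t ∧ j ∉ t)) \ L := by
        intro t ht
        rw [hDf, Finset.mem_filter] at ht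
        rw [Finset.mem_sdiff]
        exact ⟨Finset.mem_filter.mpr ⟨Finset.mem_univ t, ht.2⟩, fun hc => hLnB' t hc ht.1⟩
      have hcards := Finset.card_le_card hsub
      rw [Finset.card_sdiff_of_subset
        (fun t ht => Finset.mem_filter.mpr ⟨Finset.mem_univ t, hLavoid t ht⟩)] at hcards
      rw [card_avoid2 j hj, hLcard] at hcards
      omega
    have hdisjJD : Disjoint Jf Df := by
      rw [Finset.disjoint_left]
      intro t htJ htD
      exact (Finset.mem_filter.mp htD).2.2 (Finset.mem_filter.mp htJ).2.1
    have hwit : ∀ v ∈ (Finset.univ : Finset (Fin 7)) \ {0, j},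
        1 ≤ ∑ t ∈ Jf ∪ Df, multV v t := by
      intro v hv
      rw [Finset.mem_sdiff] at hv
      have hv0 : v ≠ 0 := by
        intro hc
        exact hv.2 (by rw [hc]; exact Finset.mem_insert_self _ _)
      have hvj : v ≠ j := by
        intro hc
        exact hv.2 (by rw [hc]; exact Finset.mem_insert_of_mem (Finset.mem_singleton_self _))
      have h2 := hcv2 v hv0
      rw [hcount] at h2
      have hs0v : Sym2.mk (0 : Fin 7) v ∈ B' :=
        hend _ (Or.inl (by rw [he1']; exact Sym2.mem_mk_left 0 v))
      have hm1 : multV v (Sym2.mk (0 : Fin 7) v) = 1 := by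
        rw [multV_mk, if_neg (fun hc => hv0 hc.symm), if_pos rfl]
      have hae := Finset.add_sum_erase B' (multV v) hs0v
      have hrest : ∑ t ∈ B'.erase (Sym2.mk (0 : Fin 7) v), multV v t = 1 := by omega
      have hex : ∃ t ∈ B'.erase (Sym2.mk (0 : Fin 7) v), multV v t ≠ 0 := by
        by_contra hcc
        push_neg at hcc
        rw [Finset.sum_eq_zero hcc] at hrest
        omega
      obtain ⟨t, htmem, htne⟩ := hex
      have htv : v ∈ t := mem_of_multV_ne_zero htne
      have htB : t ∈ B' := Finset.mem_of_mem_erase htmem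
      have htne' : t ≠ Sym2.mk (0 : Fin 7) v := Finset.ne_of_mem_erase htmem
      have ht0 : (0 : Fin 7) ∉ t := by
        intro hcc
        exact htne' ((Sym2.mem_and_mem_iff (Ne.symm hv0)).mp ⟨hcc, htv⟩)
      have htJD : t ∈ Jf ∪ Df := by
        rw [Finset.mem_union, hJf, hDf, Finset.mem_filter, Finset.mem_filter]
        by_cases hjt : j ∈ t
        · exact Or.inl ⟨htB, hjt, ht0⟩
        · exact Or.inr ⟨htB, ht0, hjt⟩
      calc 1 ≤ multV v t := one_le_multV htv
        _ ≤ ∑ t ∈ Jf ∪ Df, multV v t :=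
            Finset.single_le_sum (fun _ _ => Nat.zero_le _) htJD
    have hJDbound : ∀ t ∈ Jf ∪ Df,
        ∑ v ∈ (Finset.univ : Finset (Fin 7)) \ {0, j}, multV v t
          ≤ if j ∈ t then 1 else 2 := by
      intro t _
      have htot : ∑ v ∈ (Finset.univ : Finset (Fin 7)) \ {0, j}, multV v t
          + ∑ v ∈ ({0, j} : Finset (Fin 7)), multV v t = 2 := by
        rw [Finset.sum_sdiff (Finset.subset_univ _)]
        exact sum_multV t
      by_cases hjt : j ∈ t
      · rw [if_pos hjt]
        have hone : 1 ≤ ∑ v ∈ ({0, j} : Finset (Fin 7)), multV v t :=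
          le_trans (one_le_multV hjt)
            (Finset.single_le_sum (f := fun v => multV v t) (fun _ _ => Nat.zero_le _)
              (Finset.mem_insert_of_mem (Finset.mem_singleton_self j)))
        omega
      · rw [if_neg hjt]
        omega
    have hfinal : 5 ≤ Jf.card + 2 * Df.card := by
      calc (5 : ℕ) = ∑ _v ∈ (Finset.univ : Finset (Fin 7)) \ {0, j}, 1 := by
            rw [Finset.sum_const, smul_eq_mul, mul_one, card_K j hj]
        _ ≤ ∑ v ∈ (Finset.univ : Finset (Fin 7)) \ {0, j}, ∑ t ∈ Jf ∪ Df, multV v t :=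
            Finset.sum_le_sum hwit
        _ = ∑ t ∈ Jf ∪ Df, ∑ v ∈ (Finset.univ : Finset (Fin 7)) \ {0, j}, multV v t :=
            Finset.sum_comm
        _ ≤ ∑ t ∈ Jf ∪ Df, (if j ∈ t then 1 else 2) := Finset.sum_le_sum hJDbound
        _ = ∑ t ∈ Jf, (if j ∈ t then 1 else 2) + ∑ t ∈ Df, (if j ∈ t then 1 else 2) :=
            Finset.sum_union hdisjJD
        _ = Jf.card + 2 * Df.card := by
            rw [Finset.sum_congr rfl (fun t ht => if_pos ((Finset.mem_filter.mp ht).2.1)),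
              Finset.sum_congr rfl (fun t ht => if_neg ((Finset.mem_filter.mp ht).2.2))]
            rw [Finset.sum_const, Finset.sum_const, smul_eq_mul, smul_eq_mul]
            ring
    omega
  · -- ends (0, j): parity contradiction at 0
    have hp0 := hpar 0
    rw [he1', he2', if_pos rfl, if_neg hj] at hp0
    have hc0 := h8 0 (Or.inl he1'.symm)
    omega
  · -- ends (j, 0): parity contradiction at 0
    have hp0 := hpar 0
    rw [he1', he2', if_pos rfl, if_neg hj] at hp0
    have hc0 := h8 0 (Or.inr he2'.symm)
    omega
  · -- ends (j, j): pip count too large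
    have hcj := h8 j (Or.inl he1'.symm)
    have hge : ∀ v ∈ (Finset.univ : Finset (Fin 7)),
        2 * (v : ℕ) + (if v = j then 6 * (j : ℕ) else 0)
          ≤ (v : ℕ) * countV v g.finalState.board := by
      intro v _
      by_cases hvj : v = j
      · subst hvj
        rw [if_pos rfl, hcj]
        omega
      · rw [if_neg hvj]
        by_cases hv0 : v = 0
        · subst hv0; simp
        · have hpv := hpar v
          rw [he1', he2', if_neg (fun hc => hvj hc.symm)] at hpv
          have hmem : Sym2.mk j v ∈ B' :=
            hend _ (Or.inl (by rw [he1']; exact Sym2.mem_mk_left j v))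
          have h1 : 1 ≤ countV v g.finalState.board := by
            rw [hcount]
            calc 1 ≤ multV v (Sym2.mk j v) := one_le_multV (Sym2.mem_mk_right j v)
              _ ≤ ∑ t ∈ B', multV v t :=
                  Finset.single_le_sum (fun t _ => Nat.zero_le _) hmem
          have h2 : 2 ≤ countV v g.finalState.board := by omega
          calc 2 * (v : ℕ) + 0 = (v : ℕ) * 2 := by ring
            _ ≤ (v : ℕ) * countV v g.finalState.board := Nat.mul_le_mul_left _ h2
    have hsle := Finset.sum_le_sum hge
    rw [hsum42, sum_gj j] at hsle
    omega
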